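/- Let T be a triangulated category with coproducts, a compact generator H with Hom(H, T^i H) = 0 for i ≫ 0, and a t-structure (T^{≤0}, T^{≥0}) in the preferred equivalence class. Let G be a classical generator of T^c. Then the three metrics on S = T^c given by L_i = ⟨G⟩^{(−∞,−i]}, M_i = T^c ∩ T^{≤ −i}, and N_i = T^c ∩ [⟨G⟩^{[−i,∞)}]^⊥ satisfy: {L_i} is equivalent to {M_i}, and {M_i} is finer than {N_i} (i.e. for every i there exists j with M_j ⊆ N_i). -/

import Mathlib

namespace Stmt15

open CategoryTheory Category Limits Pretriangulated ZeroObject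

universe v u

variable {T : Type u} [Category.{v} T] [Preadditive T] [HasZeroObject T]
  [HasShift T ℤ] [∀ n : ℤ, (CategoryTheory.shiftFunctor T n).Additive] [Pretriangulated T]
  [HasCoproducts.{v} T]

/-- The canonical map `⨁ᵢ Hom(X, fᵢ) ⟶ Hom(X, ∐ f)`. -/
noncomputable def canMap {ι : Type v} [DecidableEq ι] (f : ι → T) (X : T) :
    (DirectSum ι fun i : ι => (X ⟶ f i)) →+ (X ⟶ ∐ f) :=
  DirectSum.toAddMonoid fun i =>
    AddMonoidHom.mk' (fun (h : X ⟶ f i) => h ≫ Sigma.ι f i)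
      (fun _ _ => Preadditive.add_comp _ _ _ _ _ _)

/-- An object `X` is compact if `Hom(X, −)` commutes with coproducts. -/
def IsCompactObject (X : T) : Prop :=
  ∀ {ι : Type v} [DecidableEq ι] (f : ι → T), Function.Bijective (canMap f X)

/-- `G` generates `T`: an object with no nonzero maps from any shift of `G` is zero. -/
def IsGenerator (G : T) : Prop :=
  ∀ X : T, (∀ n : ℤ, ∀ f : G⟦n⟧ ⟶ X, f = 0) → IsZero X

/-- A t-structure on `T`, given by the sequences of subcategories
`le n = T^{≤ n}` and `ge n = T^{≥ n}`. -/
structure TStruct (T : Type u) [Category.{v} T] [Preadditive T] [HasZeroObject T]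
    [HasShift T ℤ] [∀ n : ℤ, (CategoryTheory.shiftFunctor T n).Additive]
    [Pretriangulated T] where
  le : ℤ → Set T
  ge : ℤ → Set T
  le_iso : ∀ n, ∀ X Y : T, (X ≅ Y) → X ∈ le n → Y ∈ le n
  ge_iso : ∀ n, ∀ X Y : T, (X ≅ Y) → X ∈ ge n → Y ∈ ge n
  le_shift : ∀ (n : ℤ) (X : T), X ∈ le n ↔ X⟦(1 : ℤ)⟧ ∈ le (n - 1)
  ge_shift : ∀ (n : ℤ) (X : T), X ∈ ge n ↔ X⟦(1 : ℤ)⟧ ∈ ge (n - 1)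
  le_mono : ∀ n : ℤ, le n ⊆ le (n + 1)
  ge_anti : ∀ n : ℤ, ge (n + 1) ⊆ ge n
  hom_zero : ∀ X ∈ le 0, ∀ Y ∈ ge 1, ∀ f : X ⟶ Y, f = 0
  exists_triangle : ∀ X : T, ∃ (A B : T) (f : A ⟶ X) (g : X ⟶ B) (h : B ⟶ A⟦(1 : ℤ)⟧),
    A ∈ le 0 ∧ B ∈ ge 1 ∧ Triangle.mk f g h ∈ (distTriang T)

/-- A cocomplete pre-aisle: closed under isomorphisms, zero, suspension, extensions,
direct summands and small coproducts. -/
def IsCocompletePreAisle (P : Set T) : Prop :=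
  (∀ X Y : T, (X ≅ Y) → X ∈ P → Y ∈ P) ∧ ((0 : T) ∈ P) ∧
  (∀ X ∈ P, X⟦(1 : ℤ)⟧ ∈ P) ∧
  (∀ Tr ∈ (distTriang T), Tr.obj₁ ∈ P → Tr.obj₃ ∈ P → Tr.obj₂ ∈ P) ∧
  (∀ (X Y : T) (r : X ⟶ Y) (s : Y ⟶ X), s ≫ r = 𝟙 Y → X ∈ P → Y ∈ P) ∧
  (∀ {ι : Type v} (f : ι → T), (∀ i, f i ∈ P) → (∐ f) ∈ P)

/-- `overline{⟨G⟩}^{(−∞,−n]}`: the smallest cocomplete pre-aisle containing `G⟦m⟧` for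
all `m ≥ n`. -/
def aisleGen (G : T) (n : ℤ) : Set T :=
  ⋂₀ {P | IsCocompletePreAisle P ∧ ∀ m : ℤ, n ≤ m → G⟦m⟧ ∈ P}

/-- A t-structure is in the preferred equivalence class if it is equivalent to the
t-structure generated by a compact generator `G`, i.e. there is `A > 0` with
`⟨G⟩-aisle shifted by A ⊆ T^{≤0} ⊆ ⟨G⟩-aisle shifted by −A`. -/
def InPreferredClass (t : TStruct T) : Prop :=
  ∃ G : T, IsCompactObject G ∧ IsGenerator G ∧
    ∃ A : ℤ, 0 < A ∧ aisleGen G A ⊆ t.le 0 ∧ t.le 0 ⊆ aisleGen G (-A)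

/-- The subcategory `T^-_c`: objects admitting, for every `n`, a triangle
`E ⟶ X ⟶ D` with `E` compact and `D ∈ T^{≤ n}`. -/
def Tminus (t : TStruct T) : Set T :=
  {X | ∀ n : ℤ, ∃ (E D : T) (f : E ⟶ X) (g : X ⟶ D) (h : D ⟶ E⟦(1 : ℤ)⟧),
    IsCompactObject E ∧ D ∈ t.le n ∧ Triangle.mk f g h ∈ (distTriang T)}

/-- The subcategory `T^b_c = T^-_c ∩ T^b`. -/
def Tbc (t : TStruct T) : Set T :=
  Tminus t ∩ {X | ∃ m : ℤ, X ∈ t.ge m}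

/-- `T` is noetherian with witness `N` (relative to the t-structure `t`): every
`X ∈ T^-_c` admits a triangle `A ⟶ X ⟶ B` with `A ∈ T^-_c ∩ T^{≤0}` and
`B ∈ T^b_c ∩ T^{≥ −N}`. -/
def NoetherianWitness (t : TStruct T) (N : ℕ) : Prop :=
  ∀ X ∈ Tminus t, ∃ (A B : T) (f : A ⟶ X) (g : X ⟶ B) (h : B ⟶ A⟦(1 : ℤ)⟧),
    A ∈ Tminus t ∩ t.le 0 ∧ B ∈ Tbc t ∩ t.ge (-(N : ℤ)) ∧
    Triangle.mk f g h ∈ (distTriang T)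

/-- `T` is weakly approximable (relative to the t-structure `t`). -/
def WeaklyApproximable (t : TStruct T) : Prop :=
  ∃ (G : T) (A : ℕ), 0 < A ∧ IsCompactObject G ∧ IsGenerator G ∧
    G ∈ t.le (A : ℤ) ∧ (∀ X ∈ t.le (-(A : ℤ)), ∀ f : G ⟶ X, f = 0) ∧
    ∀ X ∈ t.le 0, ∃ (E D : T) (f : E ⟶ X) (g : X ⟶ D) (h : D ⟶ E⟦(1 : ℤ)⟧),
      E ∈ aisleGen G (-(A : ℤ)) ∧ D ∈ t.le (-1) ∧
      Triangle.mk f g h ∈ (distTriang T)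


/-- A class of objects closed under isomorphisms, zero, extensions and summands. -/
def IsExtSummandClosed (Q : Set T) : Prop :=
  (∀ X Y : T, (X ≅ Y) → X ∈ Q → Y ∈ Q) ∧ ((0 : T) ∈ Q) ∧
  (∀ Tr ∈ (distTriang T), Tr.obj₁ ∈ Q → Tr.obj₃ ∈ Q → Tr.obj₂ ∈ Q) ∧
  (∀ (X Y : T) (r : X ⟶ Y) (s : Y ⟶ X), s ≫ r = 𝟙 Y → X ∈ Q → Y ∈ Q)

/-- `⟨G⟩` with the set `P` of allowed shifts: the smallest iso-closed subcategory
containing `G⟦m⟧` for `m ∈ P` and closed under extensions and direct summands. -/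
def genSet (G : T) (P : Set ℤ) : Set T :=
  ⋂₀ {Q | IsExtSummandClosed Q ∧ ∀ m ∈ P, G⟦m⟧ ∈ Q}

/-- The metric `L_i = ⟨G⟩^{(−∞,−i]}` on `T^c`. -/
def Lmet (G : T) (i : ℕ) : Set T := genSet G {m : ℤ | (i : ℤ) ≤ m}

/-- The metric `M_i = T^c ∩ T^{≤ −i}`. -/
def Mmet (t : TStruct T) (i : ℕ) : Set T :=
  {X | IsCompactObject X ∧ X ∈ t.le (-(i : ℤ))}

/-- The metric `N_i = T^c ∩ [⟨G⟩^{[−i,∞)}]^⊥`. -/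
def Nmet (G : T) (i : ℕ) : Set T :=
  {X | IsCompactObject X ∧ ∀ P ∈ genSet G {m : ℤ | m ≤ (i : ℤ)}, ∀ f : P ⟶ X, f = 0}
/-! ### Module 1: shift utilities, canMap API, compactness closures -/

set_option linter.unusedSectionVars false
set_option maxHeartbeats 1000000

section Mod1

/-- transport hom-vanishing along isos -/
lemma hom_zero_of_iso {X X' Y Y' : T} (eX : X ≅ X') (eY : Y ≅ Y')
    (h : ∀ f : X ⟶ Y, f = 0) (f : X' ⟶ Y') : f = 0 := by
  have : eX.inv ≫ (eX.hom ≫ f ≫ eY.inv) ≫ eY.hom = f := by simp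
  rw [← this, h (eX.hom ≫ f ≫ eY.inv)]; simp

/-- `X⟦a⟧⟦b⟧ ≅ X⟦a+b⟧` -/
noncomputable def shAdd (X : T) (a b c : ℤ) (h : a + b = c) : X⟦a⟧⟦b⟧ ≅ X⟦c⟧ :=
  ((shiftFunctorAdd' T a b c h).app X).symm

lemma shift_vanish {X Y : T} {n : ℤ} (h : ∀ f : X ⟶ Y⟦n⟧, f = 0)
    (a b : ℤ) (hab : b - a = n) (f : X⟦a⟧ ⟶ Y⟦b⟧) : f = 0 := by
  have e : Y⟦b⟧ ≅ Y⟦n⟧⟦a⟧ := (shAdd Y n a b (by omega)).symm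
  obtain ⟨g, hg⟩ := (shiftFunctor T a).map_surjective (f ≫ e.hom)
  have hg0 : g = 0 := h g
  have : f ≫ e.hom = 0 := by rw [← hg, hg0, Functor.map_zero]
  calc f = (f ≫ e.hom) ≫ e.inv := by simp
  _ = 0 := by rw [this, zero_comp]

lemma canMap_of {ι : Type v} [DecidableEq ι] (f : ι → T) (X : T) (i : ι) (y : X ⟶ f i) :
    canMap f X (DirectSum.of _ i y) = y ≫ Sigma.ι f i :=
  DirectSum.toAddMonoid_of _ _ _

/-- projection onto one coordinate of a coproduct -/
noncomputable def sigmaProj {ι : Type v} (f : ι → T) [DecidableEq ι] (j : ι) : (∐ f) ⟶ f j :=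
  Sigma.desc (fun i => if h : i = j then eqToHom (by rw [h]) else 0)

lemma ι_sigmaProj_self {ι : Type v} (f : ι → T) [DecidableEq ι] (j : ι) :
    Sigma.ι f j ≫ sigmaProj f j = 𝟙 (f j) := by
  simp [sigmaProj]

lemma ι_sigmaProj_ne {ι : Type v} (f : ι → T) [DecidableEq ι] {i j : ι} (h : i ≠ j) :
    Sigma.ι f i ≫ sigmaProj f j = 0 := by
  simp [sigmaProj, h]

lemma canMap_proj {ι : Type v} [DecidableEq ι] (f : ι → T) (X : T)
    (x : DirectSum ι fun i : ι => (X ⟶ f i)) (j : ι) :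
    canMap f X x ≫ sigmaProj f j = x j := by
  induction x using DirectSum.induction_on with
  | zero => simp
  | of i y =>
      rw [canMap_of]
      by_cases h : i = j
      · subst h; rw [DirectSum.of_eq_same, Category.assoc, ι_sigmaProj_self, Category.comp_id]
      · rw [DirectSum.of_eq_of_ne _ _ _ (Ne.symm h), Category.assoc, ι_sigmaProj_ne f h, comp_zero]
  | add x y hx hy => rw [map_add, Preadditive.add_comp, hx, hy, DirectSum.add_apply]

lemma canMap_injective {ι : Type v} [DecidableEq ι] (f : ι → T) (X : T) :
    Function.Injective (canMap f X) := by
  intro x y h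
  refine DFinsupp.ext fun j => ?_
  rw [← canMap_proj f X x j, ← canMap_proj f X y j, h]

lemma isCompact_of_surj (X : T)
    (h : ∀ {ι : Type v} [DecidableEq ι] (f : ι → T), Function.Surjective (canMap f X)) :
    IsCompactObject X :=
  fun f => ⟨canMap_injective f _, h f⟩

/-- precomposition as a map of direct sums -/
noncomputable def dsPre {ι : Type v} [DecidableEq ι] (f : ι → T) {X Y : T} (g : Y ⟶ X) :
    (DirectSum ι fun i : ι => (X ⟶ f i)) →+ (DirectSum ι fun i : ι => (Y ⟶ f i)) :=
  DirectSum.toAddMonoid fun i =>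
    (DirectSum.of (fun i : ι => (Y ⟶ f i)) i).comp
      (AddMonoidHom.mk' (fun y => g ≫ y) (fun _ _ => Preadditive.comp_add _ _ _ _ _ _))

lemma dsPre_of {ι : Type v} [DecidableEq ι] (f : ι → T) {X Y : T} (g : Y ⟶ X)
    (i : ι) (y : X ⟶ f i) :
    dsPre f g (DirectSum.of _ i y) = DirectSum.of (fun i : ι => (Y ⟶ f i)) i (g ≫ y) := by
  unfold dsPre
  rw [DirectSum.toAddMonoid_of]
  rfl

lemma canMap_dsPre {ι : Type v} [DecidableEq ι] (f : ι → T) {X Y : T} (g : Y ⟶ X)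
    (x : DirectSum ι fun i : ι => (X ⟶ f i)) :
    canMap f Y (dsPre f g x) = g ≫ canMap f X x := by
  induction x using DirectSum.induction_on with
  | zero => rw [map_zero, map_zero, map_zero, comp_zero]
  | of i y => rw [dsPre_of, canMap_of, canMap_of, Category.assoc]
  | add x y hx hy =>
      rw [map_add, map_add, map_add, hx, hy, Preadditive.comp_add]

lemma isCompact_of_iso {X Y : T} (e : X ≅ Y) (hX : IsCompactObject X) : IsCompactObject Y := by
  refine isCompact_of_surj Y ?_
  intro ι _ f h
  obtain ⟨x, hx⟩ := (hX f).2 (e.hom ≫ h)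
  exact ⟨dsPre f e.inv x, by rw [canMap_dsPre, hx]; simp⟩

lemma isCompact_retract {X Y : T} (r : X ⟶ Y) (s : Y ⟶ X) (hsr : s ≫ r = 𝟙 Y)
    (hX : IsCompactObject X) : IsCompactObject Y := by
  refine isCompact_of_surj Y ?_
  intro ι _ f h
  obtain ⟨x, hx⟩ := (hX f).2 (r ≫ h)
  exact ⟨dsPre f s x, by rw [canMap_dsPre, hx, ← Category.assoc, hsr, Category.id_comp]⟩

lemma isCompact_zero : IsCompactObject (0 : T) := by
  refine isCompact_of_surj 0 ?_
  intro ι _ f h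
  exact ⟨0, by rw [map_zero]; exact ((isZero_zero T).eq_of_src _ _).symm⟩

end Mod1
/-! ### Module 2: compactness under shift and extensions -/

section Mod2

lemma isCompact_shift {X : T} (hX : IsCompactObject X) (n : ℤ) :
    IsCompactObject (X⟦n⟧) := by
  refine isCompact_of_surj _ ?_
  intro ι _ f h
  let Fi := shiftFunctor T (-n)
  let g : ι → T := fun i => (f i)⟦(-n : ℤ)⟧
  let cmp : (∐ fun b => Fi.obj (f b)) ⟶ Fi.obj (∐ f) := sigmaComparison Fi f
  haveI : IsIso cmp := inferInstance
  let γ := shiftFunctorCompIsoId T (-n) n (by omega)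
  let α := (shiftFunctorCompIsoId T n (-n) (by omega)).app X
  let q : X ⟶ (∐ f)⟦(-n : ℤ)⟧ := α.inv ≫ h⟦(-n : ℤ)⟧'
  obtain ⟨x, hx⟩ := (hX g).2 (q ≫ inv cmp)
  have hq : (canMap g X x) ≫ cmp = q := by rw [hx]; simp
  let conv : ∀ i : ι, (X ⟶ g i) →+ (X⟦n⟧ ⟶ f i) := fun i =>
    AddMonoidHom.mk' (fun y => y⟦n⟧' ≫ γ.hom.app (f i))
      (fun y z => by rw [Functor.map_add, Preadditive.add_comp])
  let dsConv : (DirectSum ι fun i : ι => (X ⟶ g i)) →+ (DirectSum ι fun i : ι => (X⟦n⟧ ⟶ f i)) :=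
    DirectSum.toAddMonoid fun i => (DirectSum.of (fun i : ι => (X⟦n⟧ ⟶ f i)) i).comp (conv i)
  refine ⟨dsConv x, ?_⟩
  have key : ∀ y : DirectSum ι fun i : ι => (X ⟶ g i),
      canMap f (X⟦n⟧) (dsConv y) = (canMap g X y)⟦n⟧' ≫ cmp⟦n⟧' ≫ γ.hom.app (∐ f) := by
    intro y
    induction y using DirectSum.induction_on with
    | zero => rw [map_zero, map_zero, map_zero, Functor.map_zero, zero_comp]
    | of i y =>
        have h1 : dsConv (DirectSum.of _ i y) =
            DirectSum.of (fun i : ι => (X⟦n⟧ ⟶ f i)) i (y⟦n⟧' ≫ γ.hom.app (f i)) := by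
          unfold dsConv
          rw [DirectSum.toAddMonoid_of]; rfl
        have nat := γ.hom.naturality (Sigma.ι f i)
        dsimp at nat
        have hι : (Sigma.ι g i)⟦n⟧' ≫ cmp⟦n⟧' = ((Sigma.ι f i)⟦(-n : ℤ)⟧')⟦n⟧' := by
          rw [← Functor.map_comp]
          congr 1
          exact ι_comp_sigmaComparison Fi f i
        rw [h1, canMap_of, canMap_of]
        calc (y⟦n⟧' ≫ γ.hom.app (f i)) ≫ Sigma.ι f i
            = y⟦n⟧' ≫ (γ.hom.app (f i) ≫ Sigma.ι f i) := by rw [Category.assoc]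
          _ = y⟦n⟧' ≫ (((Sigma.ι f i)⟦(-n : ℤ)⟧')⟦n⟧' ≫ γ.hom.app (∐ f)) := by rw [nat]
          _ = y⟦n⟧' ≫ ((Sigma.ι g i)⟦n⟧' ≫ cmp⟦n⟧' ≫ γ.hom.app (∐ f)) := by
              rw [← Category.assoc ((Sigma.ι g i)⟦n⟧'), hι]
          _ = (y ≫ Sigma.ι g i)⟦n⟧' ≫ cmp⟦n⟧' ≫ γ.hom.app (∐ f) := by
              rw [Functor.map_comp, Category.assoc]
    | add a b ha hb =>
        rw [map_add, map_add, map_add, Functor.map_add, Preadditive.add_comp, ha, hb]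
  rw [key x, ← Category.assoc, ← Functor.map_comp, hq]
  have hns : (h⟦(-n : ℤ)⟧')⟦n⟧' = γ.hom.app (X⟦n⟧) ≫ h ≫ γ.inv.app (∐ f) :=
    shift_neg_shift' h n
  have hcoh : (α.inv)⟦n⟧' = γ.inv.app (X⟦n⟧) := by
    unfold α γ
    exact shift_shiftFunctorCompIsoId_inv_app n (-n) (by omega) X
  have : q⟦n⟧' = γ.inv.app (X⟦n⟧) ≫ γ.hom.app (X⟦n⟧) ≫ h ≫ γ.inv.app (∐ f) := by
    unfold q
    rw [Functor.map_comp, hns, hcoh]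
  rw [this]
  simp only [Category.assoc, Iso.inv_hom_id_app, Category.comp_id]
  rw [← Category.assoc, γ.inv_hom_id_app (X⟦n⟧)]
  simp

lemma isCompact_ext (Tr : Triangle T) (hTr : Tr ∈ distTriang T)
    (h1 : IsCompactObject Tr.obj₁) (h3 : IsCompactObject Tr.obj₃) :
    IsCompactObject Tr.obj₂ := by
  classical
  refine isCompact_of_surj _ ?_
  intro ι _ f h
  obtain ⟨x, hx⟩ := (h1 f).2 (Tr.mor₁ ≫ h)
  set S := DFinsupp.support x with hS
  let pS : (∐ f) ⟶ (∐ f) := Sigma.desc (fun i => if i ∈ S then 0 else Sigma.ι f i)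
  let rS : (∐ f) ⟶ (∐ f) := Sigma.desc (fun i => if i ∈ S then Sigma.ι f i else 0)
  have hpr : pS + rS = 𝟙 (∐ f) := by
    ext i
    simp only [Preadditive.comp_add, colimit.ι_desc, Cofan.mk_ι_app, Category.comp_id, pS, rS]
    by_cases hi : i ∈ S <;> simp [hi]
  -- step A : canMap x ≫ pS = 0
  have hxpS : canMap f Tr.obj₁ x ≫ pS = 0 := by
    rw [← DirectSum.sum_support_of (x := x), map_sum, Preadditive.sum_comp]
    refine Finset.sum_eq_zero fun i hiS => ?_
    rw [canMap_of, Category.assoc]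
    have : Sigma.ι f i ≫ pS = 0 := by simp [pS, show i ∈ S from hiS]
    rw [this, comp_zero]
  have hA : Tr.mor₁ ≫ (h ≫ pS) = 0 := by
    rw [← Category.assoc, ← hx, hxpS]
  -- step B/C : through obj₃
  obtain ⟨gg, hgg⟩ := Triangle.yoneda_exact₂ _ hTr (h ≫ pS) hA
  obtain ⟨gds, hgds⟩ := (h3 f).2 gg
  -- step D : h ≫ rS is a finite sum
  have hrS : rS = ∑ j ∈ S, sigmaProj f j ≫ Sigma.ι f j := by
    ext i
    simp only [colimit.ι_desc, Cofan.mk_ι_app, Preadditive.comp_sum, rS]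
    by_cases hi : i ∈ S
    · rw [Finset.sum_eq_single i]
      · rw [← Category.assoc, ι_sigmaProj_self, Category.id_comp]
        simp [hi]
      · intro j _ hji
        rw [← Category.assoc, ι_sigmaProj_ne f (Ne.symm hji), zero_comp]
      · intro hni; exact absurd hi hni
    · rw [Finset.sum_eq_zero, if_neg hi]
      intro j hj
      have : i ≠ j := fun hij => hi (hij ▸ hj)
      rw [← Category.assoc, ι_sigmaProj_ne f this, zero_comp]
  refine ⟨dsPre f Tr.mor₂ gds + ∑ j ∈ S, DirectSum.of (fun i : ι => (Tr.obj₂ ⟶ f i)) j (h ≫ sigmaProj f j), ?_⟩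
  rw [map_add, canMap_dsPre, hgds, ← hgg, map_sum]
  have : ∑ j ∈ S, canMap f Tr.obj₂ (DirectSum.of _ j (h ≫ sigmaProj f j)) = h ≫ rS := by
    rw [hrS, Preadditive.comp_sum]
    refine Finset.sum_congr rfl fun j _ => ?_
    rw [canMap_of, Category.assoc]
  rw [this]
  calc h ≫ pS + h ≫ rS = h ≫ (pS + rS) := by rw [Preadditive.comp_add]
    _ = h := by rw [hpr, Category.comp_id]

end Mod2
/-! ### Module 3: genSet and aisleGen toolkit -/

section Mod3

lemma genSet_subset_of {W : T} {P : Set ℤ} {Q : Set T} (hQ : IsExtSummandClosed Q)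
    (hbase : ∀ m ∈ P, W⟦m⟧ ∈ Q) : genSet W P ⊆ Q :=
  fun _ hX => hX Q ⟨hQ, hbase⟩

lemma mem_genSet_base {W : T} {P : Set ℤ} {m : ℤ} (hm : m ∈ P) : W⟦m⟧ ∈ genSet W P :=
  fun _ hQ => hQ.2 m hm

lemma isExtSummandClosed_genSet (W : T) (P : Set ℤ) : IsExtSummandClosed (genSet W P) := by
  refine ⟨?_, ?_, ?_, ?_⟩
  · intro X Y e hX Q hQ; exact hQ.1.1 X Y e (hX Q hQ)
  · intro Q hQ; exact hQ.1.2.1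
  · intro Tr hTr h1 h3 Q hQ; exact hQ.1.2.2.1 Tr hTr (h1 Q hQ) (h3 Q hQ)
  · intro X Y r s hrs hX Q hQ; exact hQ.1.2.2.2 X Y r s hrs (hX Q hQ)

lemma genSet_mono {W : T} {P P' : Set ℤ} (h : P ⊆ P') : genSet W P ⊆ genSet W P' :=
  genSet_subset_of (isExtSummandClosed_genSet W P') (fun m hm => mem_genSet_base (h hm))

lemma mem_of_isZero {Q : Set T} (hQ : IsExtSummandClosed Q) {Z : T} (hZ : IsZero Z) : Z ∈ Q :=
  hQ.1 0 Z ((isZero_zero T).iso hZ) hQ.2.1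

/-- shifted distinguished triangle with explicit objects -/
lemma shift_triangle_mem (Tr : Triangle T) (hTr : Tr ∈ distTriang T) (n : ℤ) :
    ∃ Tr' ∈ distTriang T, Tr'.obj₁ = Tr.obj₁⟦n⟧ ∧ Tr'.obj₂ = Tr.obj₂⟦n⟧ ∧
      Tr'.obj₃ = Tr.obj₃⟦n⟧ :=
  ⟨(Triangle.shiftFunctor T n).obj Tr, by
    refine isomorphic_distinguished _ (Triangle.shift_distinguished Tr hTr n) _ ?_
    exact Iso.refl _, rfl, rfl, rfl⟩

lemma genSet_shift {W : T} {P : Set ℤ} {X : T} (hX : X ∈ genSet W P) (n : ℤ) :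
    X⟦n⟧ ∈ genSet W ((· + n) '' P) := by
  let Q : Set T := {X | X⟦n⟧ ∈ genSet W ((· + n) '' P)}
  have gQ := isExtSummandClosed_genSet W ((· + n) '' P)
  have : X ∈ Q := by
    refine genSet_subset_of (Q := Q) ⟨?_, ?_, ?_, ?_⟩ ?_ hX
    · intro X Y e hX'
      exact gQ.1 _ _ ((shiftFunctor T n).mapIso e) hX'
    · exact mem_of_isZero gQ ((shiftFunctor T n).map_isZero (isZero_zero T))
    · intro Tr hTr h1 h3
      obtain ⟨Tr', hTr', e1, e2, e3⟩ := shift_triangle_mem Tr hTr n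
      have := gQ.2.2.1 Tr' hTr' (by rw [e1]; exact h1) (by rw [e3]; exact h3)
      rw [e2] at this; exact this
    · intro X Y r s hrs hX'
      exact gQ.2.2.2 _ _ (r⟦n⟧') (s⟦n⟧')
        (by rw [← Functor.map_comp, hrs, CategoryTheory.Functor.map_id]) hX'
    · intro m hm
      exact gQ.1 _ _ (shAdd W m n (m+n) rfl).symm (mem_genSet_base ⟨m, hm, rfl⟩)
  exact this

/-- finite support of genSet membership -/
lemma genSet_finite {W : T} {P : Set ℤ} {X : T} (hX : X ∈ genSet W P) :
    ∃ S : Finset ℤ, ↑S ⊆ P ∧ X ∈ genSet W ↑S := by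
  classical
  let Q : Set T := {X | ∃ S : Finset ℤ, ↑S ⊆ P ∧ X ∈ genSet W ↑S}
  refine genSet_subset_of (Q := Q) ⟨?_, ?_, ?_, ?_⟩ ?_ hX
  · rintro X Y e ⟨S, hS, hXS⟩
    exact ⟨S, hS, (isExtSummandClosed_genSet W ↑S).1 X Y e hXS⟩
  · exact ⟨∅, by simp, (isExtSummandClosed_genSet W _).2.1⟩
  · rintro Tr hTr ⟨S1, hS1, h1⟩ ⟨S3, hS3, h3⟩
    refine ⟨S1 ∪ S3, by simp [Set.union_subset_iff, hS1, hS3], ?_⟩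
    refine (isExtSummandClosed_genSet W _).2.2.1 Tr hTr
      (genSet_mono (by simp) h1) (genSet_mono (by simp) h3)
  · rintro X Y r s hrs ⟨S, hS, hXS⟩
    exact ⟨S, hS, (isExtSummandClosed_genSet W ↑S).2.2.2 X Y r s hrs hXS⟩
  · intro m hm
    exact ⟨{m}, by simpa using hm, mem_genSet_base (by simp)⟩

lemma finset_int_bdd (S : Finset ℤ) : ∃ c d : ℤ, ∀ s ∈ S, c ≤ s ∧ s ≤ d := by
  classical
  induction S using Finset.induction_on with
  | empty => exact ⟨0, 0, by simp⟩
  | @insert a S' _ ih =>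
      obtain ⟨c, d, h⟩ := ih
      refine ⟨min c a, max d a, fun s hs => ?_⟩
      rcases Finset.mem_insert.mp hs with h'|h'
      · subst h'; omega
      · have := h s h'; omega

lemma genSet_compact {W : T} (hW : IsCompactObject W) {P : Set ℤ} :
    genSet W P ⊆ {X | IsCompactObject X} := by
  refine genSet_subset_of ⟨?_, ?_, ?_, ?_⟩ ?_
  · intro X Y e hX; exact isCompact_of_iso e hX
  · exact isCompact_zero
  · intro Tr hTr h1 h3; exact isCompact_ext Tr hTr h1 h3
  · intro X Y r s hrs hX; exact isCompact_retract r s hrs hX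
  · intro m _; exact isCompact_shift hW m

/-! aisleGen toolkit -/

lemma aisleGen_subset_of {W : T} {n : ℤ} {Q : Set T} (hQ : IsCocompletePreAisle Q)
    (hbase : ∀ m : ℤ, n ≤ m → W⟦m⟧ ∈ Q) : aisleGen W n ⊆ Q :=
  fun _ hX => hX Q ⟨hQ, hbase⟩

lemma mem_aisleGen_base {W : T} {n m : ℤ} (hm : n ≤ m) : W⟦m⟧ ∈ aisleGen W n :=
  fun _ hQ => hQ.2 m hm

lemma isCocompletePreAisle_aisleGen (W : T) (n : ℤ) : IsCocompletePreAisle (aisleGen W n) := by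
  refine ⟨?_, ?_, ?_, ?_, ?_, ?_⟩
  · intro X Y e hX Q hQ; exact hQ.1.1 X Y e (hX Q hQ)
  · intro Q hQ; exact hQ.1.2.1
  · intro X hX Q hQ; exact hQ.1.2.2.1 X (hX Q hQ)
  · intro Tr hTr h1 h3 Q hQ; exact hQ.1.2.2.2.1 Tr hTr (h1 Q hQ) (h3 Q hQ)
  · intro X Y r s hrs hX Q hQ; exact hQ.1.2.2.2.2.1 X Y r s hrs (hX Q hQ)
  · intro ι f hf Q hQ; exact hQ.1.2.2.2.2.2 f (fun i => hf i Q hQ)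

lemma isExtSummandClosed_of_preAisle {Q : Set T} (hQ : IsCocompletePreAisle Q) :
    IsExtSummandClosed Q :=
  ⟨hQ.1, hQ.2.1, hQ.2.2.2.1, hQ.2.2.2.2.1⟩

lemma aisleGen_anti {W : T} {n n' : ℤ} (h : n ≤ n') : aisleGen W n' ⊆ aisleGen W n :=
  aisleGen_subset_of (isCocompletePreAisle_aisleGen W n)
    (fun m hm => mem_aisleGen_base (le_trans h hm))

lemma genSet_subset_aisleGen {W : T} {P : Set ℤ} {n : ℤ} (h : ∀ m ∈ P, n ≤ m) :
    genSet W P ⊆ aisleGen W n :=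
  genSet_subset_of (isExtSummandClosed_of_preAisle (isCocompletePreAisle_aisleGen W n))
    (fun m hm => mem_aisleGen_base (h m hm))

lemma aisleGen_shift {W : T} {s : ℤ} {X : T} (hX : X ∈ aisleGen W s) (n : ℤ) :
    X⟦n⟧ ∈ aisleGen W (s + n) := by
  let Q : Set T := {X | X⟦n⟧ ∈ aisleGen W (s + n)}
  have gQ := isCocompletePreAisle_aisleGen W (s + n)
  refine aisleGen_subset_of (Q := Q) ⟨?_, ?_, ?_, ?_, ?_, ?_⟩ ?_ hX
  · intro X Y e hX'
    exact gQ.1 _ _ ((shiftFunctor T n).mapIso e) hX'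
  · exact mem_of_isZero (isExtSummandClosed_of_preAisle gQ)
      ((shiftFunctor T n).map_isZero (isZero_zero T))
  · intro X hX'
    have e : X⟦n⟧⟦(1:ℤ)⟧ ≅ X⟦(1:ℤ)⟧⟦n⟧ :=
      (shAdd X n 1 (n+1) rfl).trans (shAdd X 1 n (n+1) (by omega)).symm
    exact gQ.1 _ _ e (gQ.2.2.1 _ hX')
  · intro Tr hTr h1 h3
    obtain ⟨Tr', hTr', e1, e2, e3⟩ := shift_triangle_mem Tr hTr n
    have := gQ.2.2.2.1 Tr' hTr' (by rw [e1]; exact h1) (by rw [e3]; exact h3)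
    rw [e2] at this; exact this
  · intro X Y r s' hrs hX'
    exact gQ.2.2.2.2.1 _ _ (r⟦n⟧') (s'⟦n⟧')
      (by rw [← Functor.map_comp, hrs, CategoryTheory.Functor.map_id]) hX'
  · intro ι f hf
    have e : (∐ fun b => (f b)⟦n⟧) ≅ (∐ f)⟦n⟧ := asIso (sigmaComparison (shiftFunctor T n) f)
    exact gQ.1 _ _ e (gQ.2.2.2.2.2 _ hf)
  · intro m hm
    exact gQ.1 _ _ (shAdd W m n (m+n) rfl).symm (mem_aisleGen_base (by omega))

/-- generalized le_shift for t-structures -/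
lemma TStruct.le_shift_iff (t : TStruct T) (k : ℤ) :
    ∀ (n : ℤ) (X : T), X ∈ t.le n ↔ X⟦k⟧ ∈ t.le (n - k) := by
  induction k using Int.induction_on with
  | zero =>
      intro n X
      have e : X⟦(0:ℤ)⟧ ≅ X := (shiftFunctorZero T ℤ).app X
      rw [sub_zero]
      exact ⟨fun h => t.le_iso n X _ e.symm h, fun h => t.le_iso n _ X e h⟩
  | succ k ih =>
      intro n X
      have h1 := ih n X
      have h2 := t.le_shift (n - k) (X⟦(k:ℤ)⟧)
      have e : X⟦(k:ℤ)⟧⟦(1:ℤ)⟧ ≅ X⟦(k+1:ℤ)⟧ := shAdd X k 1 (k+1) rfl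
      rw [h1, h2]
      have : n - k - 1 = n - (k+1) := by omega
      rw [this]
      exact ⟨fun h => t.le_iso _ _ _ e h, fun h => t.le_iso _ _ _ e.symm h⟩
  | pred k ih =>
      intro n X
      have h2 := t.le_shift (n - (-k-1)) (X⟦(-k-1:ℤ)⟧)
      have e : X⟦(-k-1:ℤ)⟧⟦(1:ℤ)⟧ ≅ X⟦(-k:ℤ)⟧ := shAdd X (-k-1) 1 (-k) (by omega)
      have h3 : n - (-k-1) - 1 = n - (-k) := by omega
      rw [h3] at h2
      constructor
      · intro h
        rw [h2]
        exact t.le_iso _ _ _ e.symm ((ih n X).mp h)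
      · intro h
        exact (ih n X).mpr (t.le_iso _ _ _ e (h2.mp h))

end Mod3
/-! ### Module 4: factorization classes (Bondal–Van den Bergh / Neeman descent) -/

section Mod4

/-- `h` factors through some object of `Q` -/
def FactorsThru (Q : Set T) {K E : T} (h : K ⟶ E) : Prop :=
  ∃ F ∈ Q, ∃ (a : K ⟶ F) (b : F ⟶ E), h = a ≫ b

/-- objects all of whose maps from compacts factor through `genSet W P` -/
def CC (W : T) (P : Set ℤ) : Set T :=
  {E | ∀ K : T, IsCompactObject K → ∀ h : K ⟶ E, FactorsThru (genSet W P) h}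

lemma genSet_biprod {W : T} {P : Set ℤ} {F₁ F₂ : T} (h1 : F₁ ∈ genSet W P)
    (h2 : F₂ ∈ genSet W P) : (F₁ ⊞ F₂) ∈ genSet W P :=
  (isExtSummandClosed_genSet W P).2.2.1 _ (binaryBiproductTriangle_distinguished F₁ F₂) h1 h2

lemma factorsThru_add {W : T} {P : Set ℤ} {K E : T} {h₁ h₂ : K ⟶ E}
    (f₁ : FactorsThru (genSet W P) h₁) (f₂ : FactorsThru (genSet W P) h₂) :
    FactorsThru (genSet W P) (h₁ + h₂) := by
  obtain ⟨F₁, hF₁, a₁, b₁, e₁⟩ := f₁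
  obtain ⟨F₂, hF₂, a₂, b₂, e₂⟩ := f₂
  exact ⟨F₁ ⊞ F₂, genSet_biprod hF₁ hF₂, biprod.lift a₁ a₂, biprod.desc b₁ b₂,
    by rw [biprod.lift_desc, e₁, e₂]⟩

lemma factorsThru_postcomp {Q : Set T} {K E E' : T} {h : K ⟶ E} (g : E ⟶ E')
    (hf : FactorsThru Q h) : FactorsThru Q (h ≫ g) := by
  obtain ⟨F, hF, a, b, e⟩ := hf
  exact ⟨F, hF, a, b ≫ g, by rw [e, Category.assoc]⟩

lemma mem_CC_of_genSet {W : T} {P : Set ℤ} {E : T} (hE : E ∈ genSet W P) : E ∈ CC W P :=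
  fun _ _ h => ⟨E, hE, h, 𝟙 E, by rw [Category.comp_id]⟩

lemma CC_mono {W : T} {P P' : Set ℤ} (h : P ⊆ P') : CC W P ⊆ CC W P' := by
  intro E hE K hK f
  obtain ⟨F, hF, a, b, e⟩ := hE K hK f
  exact ⟨F, genSet_mono h hF, a, b, e⟩

lemma CC_shift {W : T} {P : Set ℤ} {E : T} (hE : E ∈ CC W P) :
    E⟦(1:ℤ)⟧ ∈ CC W ((· + 1) '' P) := by
  intro K hK f
  have α := (shiftFunctorCompIsoId T (-1) 1 (by omega)).app K
  obtain ⟨g, hg⟩ := (shiftFunctor T (1:ℤ)).map_surjective (α.hom ≫ f)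
  obtain ⟨F, hF, a, b, e⟩ := hE (K⟦(-1:ℤ)⟧) (isCompact_shift hK (-1)) g
  refine ⟨F⟦(1:ℤ)⟧, genSet_shift hF 1, α.inv ≫ a⟦(1:ℤ)⟧', b⟦(1:ℤ)⟧', ?_⟩
  have : f = α.inv ≫ g⟦(1:ℤ)⟧' := by rw [hg]; simp
  rw [this, e, Functor.map_comp, Category.assoc]

lemma image_shift_neg_one (P : Set ℤ) : ((· + (-1:ℤ)) '' ((· + (1:ℤ)) '' P)) = P := by
  ext x
  constructor
  · rintro ⟨y, ⟨z, hz, rfl⟩, rfl⟩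
    show z + 1 + -1 ∈ P
    have : z + 1 + -1 = z := by omega
    rwa [this]
  · intro hx
    refine ⟨x + 1, ⟨x, hx, rfl⟩, ?_⟩
    show x + 1 + -1 = x
    omega

lemma CC_ext {W : T} (hW : IsCompactObject W) {P : Set ℤ} (Tr : Triangle T)
    (hTr : Tr ∈ distTriang T) (h1 : Tr.obj₁ ∈ CC W P) (h3 : Tr.obj₃ ∈ CC W P) :
    Tr.obj₂ ∈ CC W P := by
  intro K hK f
  obtain ⟨F₃, hF₃, a, b, hab⟩ := h3 K hK (f ≫ Tr.mor₂)
  have hF₃c : IsCompactObject F₃ := genSet_compact hW hF₃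
  obtain ⟨Q, cmap, dmap, memQ⟩ := distinguished_cocone_triangle a
  have h5 : a ≫ (b ≫ Tr.mor₃) = 0 := by
    rw [← Category.assoc, ← hab, Category.assoc, comp_distTriang_mor_zero₂₃ _ hTr, comp_zero]
  obtain ⟨e, he⟩ := Triangle.yoneda_exact₂ _ memQ (b ≫ Tr.mor₃) h5
  change Q ⟶ Tr.obj₁⟦(1:ℤ)⟧ at e
  change b ≫ Tr.mor₃ = cmap ≫ e at he
  have hQc : IsCompactObject Q :=
    isCompact_ext _ (rot_of_distTriang _ memQ) hF₃c (isCompact_shift hK 1)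
  obtain ⟨F₁, hF₁, e₁, nm, hen⟩ := CC_shift h1 Q hQc e
  have hF₁n : F₁⟦(-1:ℤ)⟧ ∈ genSet W P := by
    have := genSet_shift hF₁ (-1)
    rwa [image_shift_neg_one] at this
  let ν : (shiftFunctor T (-1) ⋙ shiftFunctor T (1:ℤ)).obj F₁ ≅ F₁ :=
    (shiftFunctorCompIsoId T (-1) 1 (by omega)).app F₁
  set ζ : F₃ ⟶ F₁ := cmap ≫ e₁ with hζ
  obtain ⟨E', x, y, memT''⟩ := distinguished_cocone_triangle₂ (ζ ≫ ν.inv)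
  have hE' : E' ∈ genSet W P :=
    (isExtSummandClosed_genSet W P).2.2.1 _ memT'' hF₁n hF₃
  -- fill-in morphism
  let nm' : F₁⟦(-1:ℤ)⟧ ⟶ Tr.obj₁ :=
    nm⟦(-1:ℤ)⟧' ≫ (shiftFunctorCompIsoId T 1 (-1) (by omega)).hom.app Tr.obj₁
  have hcoh : ν.inv ≫ nm'⟦(1:ℤ)⟧' = nm := by
    unfold nm'
    rw [Functor.map_comp]
    have h6 : (nm⟦(-1:ℤ)⟧')⟦(1:ℤ)⟧' = ν.hom ≫ nm ≫
        (shiftFunctorCompIsoId T (-1) 1 (neg_add_cancel 1)).inv.app (Tr.obj₁⟦(1:ℤ)⟧) :=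
      shift_neg_shift' nm 1
    rw [h6]
    have h7 : ((shiftFunctorCompIsoId T 1 (-1) (by omega)).hom.app Tr.obj₁)⟦(1:ℤ)⟧' =
        (shiftFunctorCompIsoId T (-1) 1 (by omega)).hom.app (Tr.obj₁⟦(1:ℤ)⟧) :=
      shift_shiftFunctorCompIsoId_hom_app 1 (-1) (by omega) Tr.obj₁
    rw [h7]
    simp
  have comm : (Triangle.mk x y (ζ ≫ ν.inv)).mor₃ ≫ nm'⟦(1:ℤ)⟧' = b ≫ Tr.mor₃ := by
    show (ζ ≫ ν.inv) ≫ nm'⟦(1:ℤ)⟧' = b ≫ Tr.mor₃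
    rw [Category.assoc, hcoh, he, hζ, Category.assoc, ← hen]
  obtain ⟨ε, sq1, sq2⟩ :=
    complete_distinguished_triangle_morphism₂ _ _ memT'' hTr nm' b comm
  dsimp at sq1 sq2
  change E' ⟶ Tr.obj₂ at ε
  -- lift a to E'
  have h8 : a ≫ (Triangle.mk x y (ζ ≫ ν.inv)).mor₃ = 0 := by
    show a ≫ (ζ ≫ ν.inv) = 0
    rw [hζ, ← Category.assoc, ← Category.assoc]
    have h8a : a ≫ cmap = 0 := comp_distTriang_mor_zero₁₂ _ memQ
    rw [Category.assoc, ← Category.assoc, h8a, zero_comp, zero_comp]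
  obtain ⟨q, hq⟩ := Triangle.coyoneda_exact₃ _ memT'' a h8
  dsimp at hq
  change K ⟶ E' at q
  change a = q ≫ y at hq
  -- the error term
  have h9 : (f - q ≫ ε) ≫ Tr.mor₂ = 0 := by
    have hε : ε ≫ Tr.mor₂ = y ≫ b := sq2.symm
    rw [Preadditive.sub_comp, Category.assoc, hε, hab, ← Category.assoc, ← hq, sub_self]
  obtain ⟨g, hg⟩ := Triangle.coyoneda_exact₂ _ hTr (f - q ≫ ε) h9
  obtain ⟨F₀, hF₀, g₀, m₀, hgm⟩ := h1 K hK g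
  have h10 : f = g₀ ≫ (m₀ ≫ Tr.mor₁) + q ≫ ε := by
    have : f - q ≫ ε = g₀ ≫ (m₀ ≫ Tr.mor₁) := by rw [hg, hgm, Category.assoc]
    rw [sub_eq_iff_eq_add] at this
    exact this
  rw [h10]
  refine factorsThru_add ⟨F₀, hF₀, g₀, m₀ ≫ Tr.mor₁, rfl⟩ ⟨E', hE', q, ε, rfl⟩

end Mod4
/-! ### Module 5: CC is a cocomplete pre-aisle -/

section Mod5

lemma CC_isCocompletePreAisle {W : T} (hW : IsCompactObject W) {P : Set ℤ}
    (hP : ∀ m ∈ P, m + 1 ∈ P) : IsCocompletePreAisle (CC W P) := by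
  refine ⟨?_, ?_, ?_, ?_, ?_, ?_⟩
  · -- iso
    intro X Y e hX K hK f
    have := factorsThru_postcomp e.hom (hX K hK (f ≫ e.inv))
    rw [Category.assoc, e.inv_hom_id, Category.comp_id] at this
    exact this
  · -- zero
    intro K hK f
    refine ⟨0, (isExtSummandClosed_genSet W P).2.1, 0, 0, ?_⟩
    rw [zero_comp]
    exact (isZero_zero T).eq_of_tgt f 0
  · -- shift
    intro X hX
    refine CC_mono ?_ (CC_shift hX)
    rintro _ ⟨m, hm, rfl⟩
    exact hP m hm
  · -- extensions
    intro Tr hTr h1 h3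
    exact CC_ext hW Tr hTr h1 h3
  · -- summands
    intro X Y r s hrs hX K hK f
    have := factorsThru_postcomp r (hX K hK (f ≫ s))
    rw [Category.assoc, hrs, Category.comp_id] at this
    exact this
  · -- coproducts
    intro ι E hE K hK f
    classical
    obtain ⟨x, hx⟩ := (hK E).2 f
    rw [← hx]
    clear hx f
    induction x using DirectSum.induction_on with
    | zero =>
        rw [map_zero]
        exact ⟨0, (isExtSummandClosed_genSet W P).2.1, 0, 0, by rw [zero_comp]⟩
    | of i y =>
        rw [canMap_of]
        exact factorsThru_postcomp (Sigma.ι E i) (hE i K hK y)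
    | add u w hu hw =>
        rw [map_add]
        exact factorsThru_add hu hw

lemma CC_retract {W : T} {P : Set ℤ} {X : T} (hX : X ∈ CC W P) (hXc : IsCompactObject X) :
    X ∈ genSet W P := by
  obtain ⟨F, hF, a, b, hab⟩ := hX X hXc (𝟙 X)
  exact (isExtSummandClosed_genSet W P).2.2.2 F X b a hab.symm hF

/-- key consequence: a compact object in `aisleGen W s` lies in `genSet W {m | s ≤ m}` -/
lemma compact_aisleGen_mem_genSet {W : T} (hW : IsCompactObject W) {s : ℤ} {X : T}
    (hX : X ∈ aisleGen W s) (hXc : IsCompactObject X) : X ∈ genSet W {m | s ≤ m} := by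
  refine CC_retract ?_ hXc
  have h := aisleGen_subset_of (W := W) (n := s)
    (CC_isCocompletePreAisle hW (P := {m | s ≤ m}) (fun m hm => by simp at hm ⊢; omega))
    (fun m hm => mem_CC_of_genSet (mem_genSet_base hm))
  exact h hX

end Mod5
/-! ### Module 6: telescopes (sequential homotopy colimits) -/

section Mod6

variable (A : ℕ → T) (a : ∀ n, A n ⟶ A (n + 1))

noncomputable abbrev teleFam : ULift.{v} ℕ → T := fun n => A n.down

noncomputable def teleSigma : (∐ teleFam A) ⟶ (∐ teleFam A) :=
  Sigma.desc (fun n => a n.down ≫ Sigma.ι (teleFam A) ⟨n.down + 1⟩)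

variable {A a}

noncomputable def chainLe {A : ℕ → T} (a : ∀ n, A n ⟶ A (n + 1)) : ∀ (m k : ℕ), A m ⟶ A (m + k)
  | _, 0 => 𝟙 _
  | m, (k+1) => chainLe a m k ≫ a (m + k)

lemma ι_teleFam_cast {k k' : ℕ} (h : k = k') :
    Sigma.ι (teleFam A) ⟨k⟩ = eqToHom (by rw [h]) ≫ Sigma.ι (teleFam A) ⟨k'⟩ := by
  subst h; simp

section WithTriangle

variable {E : T} {p : (∐ teleFam A) ⟶ E} {d : E ⟶ (∐ teleFam A)⟦(1:ℤ)⟧}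
variable (mem : Triangle.mk (𝟙 (∐ teleFam A) - teleSigma A a) p d ∈ distTriang T)

include mem

lemma tele_ι_p (n : ℕ) :
    Sigma.ι (teleFam A) ⟨n⟩ ≫ p = a n ≫ Sigma.ι (teleFam A) ⟨n + 1⟩ ≫ p := by
  have h0 : (𝟙 (∐ teleFam A) - teleSigma A a) ≫ p = 0 := comp_distTriang_mor_zero₁₂ _ mem
  have h2 : Sigma.ι (teleFam A) ⟨n⟩ ≫ teleSigma A a =
      a n ≫ Sigma.ι (teleFam A) ⟨n + 1⟩ := by
    unfold teleSigma
    exact colimit.ι_desc _ _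
  have h1 := congrArg (fun q => Sigma.ι (teleFam A) ⟨n⟩ ≫ q) h0
  beta_reduce at h1
  rw [comp_zero, ← Category.assoc, Preadditive.comp_sub, Category.comp_id, h2,
    Preadditive.sub_comp, Category.assoc] at h1
  rw [sub_eq_zero] at h1
  exact h1

lemma tele_ι_p_chain (n k : ℕ) :
    Sigma.ι (teleFam A) ⟨n⟩ ≫ p = chainLe a n k ≫ Sigma.ι (teleFam A) ⟨n + k⟩ ≫ p := by
  induction k with
  | zero => exact (Category.id_comp _).symm
  | succ k ih =>
      rw [ih, tele_ι_p mem (n + k)]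
      show chainLe a n k ≫ a (n+k) ≫ Sigma.ι (teleFam A) ⟨n+k+1⟩ ≫ p
        = (chainLe a n k ≫ a (n+k)) ≫ Sigma.ι (teleFam A) ⟨n+k+1⟩ ≫ p
      rw [Category.assoc]

lemma tele_push (m₁ m₂ : ℕ) (h : m₁ ≤ m₂) :
    ∃ c : A m₁ ⟶ A m₂, Sigma.ι (teleFam A) ⟨m₁⟩ ≫ p = c ≫ Sigma.ι (teleFam A) ⟨m₂⟩ ≫ p := by
  obtain ⟨k, rfl⟩ := Nat.exists_eq_add_of_le h
  exact ⟨chainLe a m₁ k, tele_ι_p_chain mem m₁ k⟩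

/-- any map from a compact into the telescope kills `d` -/
lemma tele_comp_d_zero {K : T} (hK : IsCompactObject K) (ψ : K ⟶ E) : ψ ≫ d = 0 := by
  classical
  have h1 : d ≫ (𝟙 (∐ teleFam A) - teleSigma A a)⟦(1:ℤ)⟧' = 0 :=
    comp_distTriang_mor_zero₃₁ _ mem
  let cmp : (∐ fun b => (shiftFunctor T (1:ℤ)).obj (teleFam A b)) ⟶ (∐ teleFam A)⟦(1:ℤ)⟧ :=
    sigmaComparison (shiftFunctor T (1:ℤ)) (teleFam A)
  haveI : IsIso cmp := inferInstance
  set σ₁ : (∐ fun b => (shiftFunctor T (1:ℤ)).obj (teleFam A b)) ⟶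
      (∐ fun b => (shiftFunctor T (1:ℤ)).obj (teleFam A b)) :=
    Sigma.desc (fun n => (a n.down)⟦(1:ℤ)⟧' ≫
      Sigma.ι (fun b => (shiftFunctor T (1:ℤ)).obj (teleFam A b)) ⟨n.down + 1⟩) with hσ₁
  have hcomm : cmp ≫ (teleSigma A a)⟦(1:ℤ)⟧' = σ₁ ≫ cmp := by
    ext n
    rw [← Category.assoc, ι_comp_sigmaComparison, ← Category.assoc]
    rw [hσ₁, colimit.ι_desc]
    dsimp
    rw [← Functor.map_comp]
    rw [Category.assoc, ι_comp_sigmaComparison, ← Functor.map_comp]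
    congr 1
    unfold teleSigma
    exact colimit.ι_desc _ _
  set w : K ⟶ (∐ teleFam A)⟦(1:ℤ)⟧ := ψ ≫ d with hw
  have hw1 : w ≫ (𝟙 (∐ teleFam A) - teleSigma A a)⟦(1:ℤ)⟧' = 0 := by
    rw [hw, Category.assoc, h1, comp_zero]
  set w' : K ⟶ (∐ fun b => (shiftFunctor T (1:ℤ)).obj (teleFam A b)) := w ≫ inv cmp with hw'
  have hw'cmp : w' ≫ cmp = w := by rw [hw', Category.assoc, IsIso.inv_hom_id, Category.comp_id]
  have h2 : (𝟙 (∐ teleFam A) - teleSigma A a)⟦(1:ℤ)⟧' =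
      𝟙 ((∐ teleFam A)⟦(1:ℤ)⟧) - (teleSigma A a)⟦(1:ℤ)⟧' := by
    rw [Functor.map_sub, CategoryTheory.Functor.map_id]
  have h4 : w ≫ (teleSigma A a)⟦(1:ℤ)⟧' = w := by
    rw [h2] at hw1
    rw [Preadditive.comp_sub, Category.comp_id, sub_eq_zero] at hw1
    exact hw1.symm
  have h5 : (w' ≫ σ₁) ≫ cmp = w' ≫ cmp := by
    rw [Category.assoc, ← hcomm, ← Category.assoc, hw'cmp, h4]
  have hfix : w' ≫ σ₁ = w' := (cancel_mono cmp).mp h5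
  -- now transfer to the direct sum and use injectivity of 1 - shift
  obtain ⟨x, hx⟩ := (hK (fun b => (shiftFunctor T (1:ℤ)).obj (teleFam A b))).2 w'
  let dsUp : (DirectSum (ULift.{v} ℕ) fun n => (K ⟶ (shiftFunctor T (1:ℤ)).obj (teleFam A n))) →+
      (DirectSum (ULift.{v} ℕ) fun n => (K ⟶ (shiftFunctor T (1:ℤ)).obj (teleFam A n))) :=
    DirectSum.toAddMonoid fun n =>
      (DirectSum.of (fun n : ULift.{v} ℕ =>
        (K ⟶ (shiftFunctor T (1:ℤ)).obj (teleFam A n))) ⟨n.down + 1⟩).comp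
        (AddMonoidHom.mk' (fun y => y ≫ (a n.down)⟦(1:ℤ)⟧')
          (fun y z => Preadditive.add_comp _ _ _ _ _ _))
  have dsUp_of : ∀ (n : ULift.{v} ℕ) (z : K ⟶ (shiftFunctor T (1:ℤ)).obj (teleFam A n)),
      dsUp (DirectSum.of _ n z) =
        DirectSum.of (fun n : ULift.{v} ℕ => (K ⟶ (shiftFunctor T (1:ℤ)).obj (teleFam A n)))
          ⟨n.down + 1⟩ (z ≫ (a n.down)⟦(1:ℤ)⟧') := by
    intro n z
    unfold dsUp
    rw [DirectSum.toAddMonoid_of]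
    rfl
  have hdsUp : ∀ y, canMap (fun b => (shiftFunctor T (1:ℤ)).obj (teleFam A b)) K (dsUp y) =
      canMap (fun b => (shiftFunctor T (1:ℤ)).obj (teleFam A b)) K y ≫ σ₁ := by
    intro y
    induction y using DirectSum.induction_on with
    | zero => simp only [map_zero, zero_comp]
    | of n z =>
        rw [dsUp_of, canMap_of, canMap_of]
        have hι : Sigma.ι (fun b => (shiftFunctor T (1:ℤ)).obj (teleFam A b)) n ≫ σ₁ =
            (a n.down)⟦(1:ℤ)⟧' ≫
              Sigma.ι (fun b => (shiftFunctor T (1:ℤ)).obj (teleFam A b)) ⟨n.down + 1⟩ := by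
          rw [hσ₁]; exact colimit.ι_desc _ _
        rw [Category.assoc, Category.assoc, hι]
    | add u v hu hv => simp only [map_add, hu, hv, Preadditive.add_comp]
  have hxfix : dsUp x = x := by
    apply canMap_injective
    rw [hdsUp, hx, hfix]
  have hcomp0 : ∀ y, (dsUp y) ⟨0⟩ = 0 := by
    intro y
    induction y using DirectSum.induction_on with
    | zero => simp only [map_zero, DirectSum.zero_apply]
    | of n z =>
        rw [dsUp_of, DirectSum.of_eq_of_ne]
        intro hcontra
        have := congrArg ULift.down hcontra
        simp at this
    | add u v hu hv => simp only [map_add, DirectSum.add_apply, hu, hv, add_zero]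
  have hcompS : ∀ (y) (k : ℕ), (dsUp y) ⟨k + 1⟩ = (y ⟨k⟩) ≫ (a k)⟦(1:ℤ)⟧' := by
    intro y k
    induction y using DirectSum.induction_on with
    | zero => simp only [map_zero, DirectSum.zero_apply, zero_comp]
    | of n z =>
        rw [dsUp_of]
        by_cases hnk : n = (⟨k⟩ : ULift.{v} ℕ)
        · subst hnk
          rw [DirectSum.of_eq_same, DirectSum.of_eq_same]
        · have hne : (⟨n.down + 1⟩ : ULift.{v} ℕ) ≠ ⟨k + 1⟩ := by
            intro hcontra
            apply hnk
            have := congrArg ULift.down hcontra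
            simp at this
            obtain ⟨nd⟩ := n
            simp at this ⊢
            exact this
          rw [DirectSum.of_eq_of_ne _ _ _ (Ne.symm hne), DirectSum.of_eq_of_ne _ _ _ (Ne.symm hnk), zero_comp]
    | add u v hu hv =>
        simp only [map_add, DirectSum.add_apply, hu, hv, Preadditive.add_comp]
  have hx0 : ∀ k : ℕ, x ⟨k⟩ = 0 := by
    intro k
    induction k with
    | zero => rw [← hxfix]; exact hcomp0 x
    | succ k ih => rw [← hxfix, hcompS x k, ih, zero_comp]
  have hxz : x = 0 := by
    refine DFinsupp.ext fun n => ?_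
    obtain ⟨k⟩ := n
    exact hx0 k
  have hwz : w = 0 := by
    rw [← hw'cmp, ← hx, hxz, map_zero, zero_comp]
  exact hwz

/-- factorization through a finite stage -/
lemma tele_factor {K : T} (hK : IsCompactObject K) (ψ : K ⟶ E) :
    ∃ (m : ℕ) (χ : K ⟶ A m), ψ = χ ≫ Sigma.ι (teleFam A) ⟨m⟩ ≫ p := by
  classical
  obtain ⟨ψ', hψ'⟩ := Triangle.coyoneda_exact₃ _ mem ψ (tele_comp_d_zero mem hK ψ)
  obtain ⟨x, hx⟩ := (hK (teleFam A)).2 ψ'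
  rw [hψ', ← hx]
  have key : ∀ z : DirectSum (ULift.{v} ℕ) fun n => (K ⟶ teleFam A n),
      ∃ (m : ℕ) (χ : K ⟶ A m),
        canMap (teleFam A) K z ≫ p = χ ≫ Sigma.ι (teleFam A) ⟨m⟩ ≫ p := by
    intro z
    induction z using DirectSum.induction_on with
    | zero => exact ⟨0, 0, by rw [map_zero, zero_comp, zero_comp]⟩
    | of n y =>
        exact ⟨n.down, y, by rw [canMap_of, Category.assoc]⟩
    | add u v hu hv =>
        obtain ⟨m₁, χ₁, h₁⟩ := hu
        obtain ⟨m₂, χ₂, h₂⟩ := hv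
        obtain ⟨c₁, hc₁⟩ := tele_push mem m₁ (max m₁ m₂) (le_max_left _ _)
        obtain ⟨c₂, hc₂⟩ := tele_push mem m₂ (max m₁ m₂) (le_max_right _ _)
        refine ⟨max m₁ m₂, χ₁ ≫ c₁ + χ₂ ≫ c₂, ?_⟩
        rw [map_add, Preadditive.add_comp, h₁, h₂, Preadditive.add_comp]
        rw [Category.assoc, Category.assoc, ← hc₁, ← hc₂]
  exact key x

end WithTriangle

end Mod6
/-! ### Module 7: cellular towers — generation by a compact generator -/

section Mod7

/-- index of all cells over `Y` -/
abbrev cellIdx (W Y : T) : Type v := Σ k : ULift.{v} ℤ, (W⟦k.down⟧ ⟶ Y)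

noncomputable abbrev cellFam (W Y : T) : cellIdx W Y → T := fun pq => W⟦pq.1.down⟧

noncomputable def cellDesc (W Y : T) : (∐ cellFam W Y) ⟶ Y := Sigma.desc (fun pq => pq.2)

lemma step_exists (W X : T) (E : T) (e : E ⟶ X) :
    ∃ (E' : T) (τ : E ⟶ E') (e' : E' ⟶ X),
      e = τ ≫ e' ∧
      (∀ (k : ℤ) (ψ : W⟦k⟧ ⟶ E), ψ ≫ e = 0 → ψ ≫ τ = 0) ∧
      (∀ Q : Set T, IsCocompletePreAisle Q → (∀ k : ℤ, W⟦k⟧ ∈ Q) → E ∈ Q → E' ∈ Q) := by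
  classical
  let idx : Type v := Σ k : ULift.{v} ℤ, {ψ : W⟦k.down⟧ ⟶ E // ψ ≫ e = 0}
  let fam : idx → T := fun pq => W⟦pq.1.down⟧
  let κ : (∐ fam) ⟶ E := Sigma.desc (fun pq => pq.2.1)
  obtain ⟨E', τ, δ, memS⟩ := distinguished_cocone_triangle κ
  have hκe : κ ≫ e = 0 := by
    ext pq
    rw [← Category.assoc]
    have : Sigma.ι fam pq ≫ κ = pq.2.1 := colimit.ι_desc _ _
    rw [this, pq.2.2, comp_zero]
  obtain ⟨e', he'⟩ := Triangle.yoneda_exact₂ _ memS e hκe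
  refine ⟨E', τ, e', he', ?_, ?_⟩
  · intro k ψ hψ
    have hfact : Sigma.ι fam ⟨⟨k⟩, ⟨ψ, hψ⟩⟩ ≫ κ = ψ := colimit.ι_desc _ _
    have hκτ : κ ≫ τ = 0 := comp_distTriang_mor_zero₁₂ _ memS
    rw [← hfact, Category.assoc, hκτ, comp_zero]
  · intro Q hQ hshifts hE
    have hrot := rot_of_distTriang _ memS
    exact hQ.2.2.2.1 _ hrot hE
      (hQ.2.2.1 _ (hQ.2.2.2.2.2 fam (fun pq => hshifts pq.1.down)))

noncomputable def towerE (W X : T) : ℕ → Σ' (E : T), E ⟶ X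
  | 0 => ⟨_, cellDesc W X⟩
  | (n+1) =>
      ⟨(step_exists W X (towerE W X n).1 (towerE W X n).2).choose,
        (step_exists W X (towerE W X n).1 (towerE W X n).2).choose_spec.choose_spec.choose⟩

noncomputable def Et (W X : T) (n : ℕ) : T := (towerE W X n).1
noncomputable def et (W X : T) (n : ℕ) : Et W X n ⟶ X := (towerE W X n).2
noncomputable def τt (W X : T) (n : ℕ) : Et W X n ⟶ Et W X (n+1) :=
  (step_exists W X (Et W X n) (et W X n)).choose_spec.choose

lemma et_succ (W X : T) (n : ℕ) : et W X n = τt W X n ≫ et W X (n+1) :=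
  (step_exists W X (Et W X n) (et W X n)).choose_spec.choose_spec.choose_spec.1

lemma τt_kill (W X : T) (n : ℕ) (k : ℤ) (ψ : W⟦k⟧ ⟶ Et W X n)
    (hψ : ψ ≫ et W X n = 0) : ψ ≫ τt W X n = 0 :=
  (step_exists W X (Et W X n) (et W X n)).choose_spec.choose_spec.choose_spec.2.1 k ψ hψ

lemma Et_mem (W X : T) (Q : Set T) (hQ : IsCocompletePreAisle Q)
    (hshifts : ∀ k : ℤ, W⟦k⟧ ∈ Q) (n : ℕ) : Et W X n ∈ Q := by
  induction n with
  | zero => exact hQ.2.2.2.2.2 (cellFam W X) (fun pq => hshifts pq.1.down)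
  | succ n ih =>
      exact (step_exists W X (Et W X n) (et W X n)).choose_spec.choose_spec.choose_spec.2.2
        Q hQ hshifts ih

/-- A compact generator cocompactly generates everything. -/
lemma generator_generates {W : T} (hWc : IsCompactObject W) (hWg : IsGenerator W) (X : T)
    (Q : Set T) (hQ : IsCocompletePreAisle Q) (hshifts : ∀ k : ℤ, W⟦k⟧ ∈ Q) : X ∈ Q := by
  classical
  set A : ℕ → T := fun n => Et W X n with hA
  set a : ∀ n, A n ⟶ A (n+1) := fun n => τt W X n with ha
  obtain ⟨Einf, p, d, mem⟩ :=
    distinguished_cocone_triangle (𝟙 (∐ teleFam A) - teleSigma A a)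
  set c : (∐ teleFam A) ⟶ X := Sigma.desc (fun n => et W X n.down) with hcdef
  have hc : (𝟙 (∐ teleFam A) - teleSigma A a) ≫ c = 0 := by
    ext n
    rw [← Category.assoc, Preadditive.comp_sub, Category.comp_id]
    have h1 : Sigma.ι (teleFam A) n ≫ teleSigma A a =
        a n.down ≫ Sigma.ι (teleFam A) ⟨n.down + 1⟩ := by
      unfold teleSigma; exact colimit.ι_desc _ _
    rw [h1, Preadditive.sub_comp, Category.assoc]
    have h2 : Sigma.ι (teleFam A) n ≫ c = et W X n.down := colimit.ι_desc _ _
    have h3 : Sigma.ι (teleFam A) ⟨n.down + 1⟩ ≫ c = et W X (n.down + 1) := colimit.ι_desc _ _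
    rw [h2, h3, ha]
    rw [← et_succ W X n.down, sub_self, comp_zero]
  obtain ⟨φ, hφ⟩ := Triangle.yoneda_exact₂ _ mem c hc
  change Einf ⟶ X at φ
  change c = p ≫ φ at hφ
  -- surjectivity
  have hsurj : ∀ (k : ℤ) (x : W⟦k⟧ ⟶ X), ∃ eh : W⟦k⟧ ⟶ Einf, eh ≫ φ = x := by
    intro k x
    refine ⟨(Sigma.ι (cellFam W X) ⟨⟨k⟩, x⟩ ≫ Sigma.ι (teleFam A) ⟨0⟩) ≫ p, ?_⟩
    have h4 : Sigma.ι (teleFam A) ⟨0⟩ ≫ c = et W X 0 := colimit.ι_desc _ _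
    have h7 : Sigma.ι (teleFam A) ⟨0⟩ ≫ p ≫ φ = et W X 0 := by rw [← hφ]; exact h4
    have h6 : Sigma.ι (cellFam W X) ⟨⟨k⟩, x⟩ ≫ et W X 0 = x := colimit.ι_desc _ _
    exact ((Category.assoc _ _ _).trans (Category.assoc _ _ _)).trans
      ((congrArg (fun (z : A 0 ⟶ X) => Sigma.ι (cellFam W X) ⟨⟨k⟩, x⟩ ≫ z) h7).trans h6)
  -- injectivity
  have hinj : ∀ (k : ℤ) (ψ : W⟦k⟧ ⟶ Einf), ψ ≫ φ = 0 → ψ = 0 := by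
    intro k ψ hψ
    obtain ⟨m, χ, hχ⟩ := tele_factor mem (isCompact_shift hWc k) ψ
    have hχe : χ ≫ et W X m = 0 := by
      have h5 : Sigma.ι (teleFam A) ⟨m⟩ ≫ c = et W X m := colimit.ι_desc _ _
      have h6 : ψ ≫ φ = χ ≫ et W X m := by
        calc ψ ≫ φ = χ ≫ (Sigma.ι (teleFam A) ⟨m⟩ ≫ (p ≫ φ)) := by
              rw [hχ]; simp [Category.assoc]
          _ = χ ≫ (Sigma.ι (teleFam A) ⟨m⟩ ≫ c) := by rw [← hφ]
          _ = χ ≫ et W X m := by rw [h5]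
      rw [← h6, hψ]
    have hχτ : χ ≫ τt W X m = 0 := τt_kill W X m k χ hχe
    rw [hχ, tele_ι_p mem m, ha]
    rw [← Category.assoc, hχτ, zero_comp]
  -- the cone is zero
  obtain ⟨D, π, δD, memD⟩ := distinguished_cocone_triangle φ
  have hDzero : ∀ (k : ℤ) (c₀ : W⟦k⟧ ⟶ D), c₀ = 0 := by
    intro k c₀
    have hδφ : δD ≫ φ⟦(1:ℤ)⟧' = 0 := by
      have := comp_distTriang_mor_zero₃₁ _ memD
      exact this
    have hzero1 : (c₀ ≫ δD) = 0 := by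
      -- conjugate down and use hinj
      have α := (shiftFunctorCompIsoId T (-1) (1:ℤ) (by omega)).app (W⟦k⟧)
      obtain ⟨g, hg⟩ := (shiftFunctor T (1:ℤ)).map_surjective (α.hom ≫ c₀ ≫ δD)
      have hgφ : g ≫ φ = 0 := by
        apply (shiftFunctor T (1:ℤ)).map_injective
        rw [Functor.map_comp, hg, Functor.map_zero, Category.assoc, Category.assoc, hδφ,
          comp_zero, comp_zero]
      have e := shAdd W k (-1) (k-1) (by omega)
      have hψ0 : (e.inv ≫ g) = 0 := by
        refine hinj (k-1) (e.inv ≫ g) ?_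
        rw [Category.assoc, hgφ, comp_zero]
      have hg0 : g = 0 := by
        have : g = e.hom ≫ (e.inv ≫ g) := by simp
        rw [this, hψ0, comp_zero]
      have : α.hom ≫ c₀ ≫ δD = 0 := by rw [← hg, hg0, Functor.map_zero]
      calc c₀ ≫ δD = α.inv ≫ (α.hom ≫ c₀ ≫ δD) := by simp
        _ = 0 := by rw [this, comp_zero]
    obtain ⟨ξ, hξ⟩ := Triangle.coyoneda_exact₃ _ memD c₀ hzero1
    change W⟦k⟧ ⟶ X at ξ
    change c₀ = ξ ≫ π at hξ
    obtain ⟨eh, heh⟩ := hsurj k ξ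
    have hφπ : φ ≫ π = 0 := comp_distTriang_mor_zero₁₂ _ memD
    rw [hξ, ← heh, Category.assoc, hφπ, comp_zero]
  have hD : IsZero D := hWg D hDzero
  have hφiso : IsIso φ := (Triangle.isZero₃_iff_isIso₁ _ memD).mp hD
  -- memberships
  have hEinf : Einf ∈ Q := by
    have hrot := rot_of_distTriang _ mem
    refine hQ.2.2.2.1 _ hrot ?_ ?_
    · exact hQ.2.2.2.2.2 (teleFam A) (fun n => Et_mem W X Q hQ hshifts n.down)
    · exact hQ.2.2.1 _ (hQ.2.2.2.2.2 (teleFam A) (fun n => Et_mem W X Q hQ hshifts n.down))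
  exact hQ.1 Einf X (asIso φ) hEinf

/-- every compact object is classically generated by a compact generator -/
lemma compact_mem_genSet_univ {W : T} (hWc : IsCompactObject W) (hWg : IsGenerator W)
    {X : T} (hXc : IsCompactObject X) : X ∈ genSet W Set.univ := by
  have hQ := CC_isCocompletePreAisle hWc (P := Set.univ) (by simp)
  have hX : X ∈ CC W Set.univ := generator_generates hWc hWg X _ hQ
    (fun k => mem_CC_of_genSet (mem_genSet_base (by simp)))
  exact CC_retract hX hXc

end Mod7
/-! ### Module 8: Hom-vanishing between generated classes; misc -/

section Mod8

lemma isExtSummandClosed_compacts : IsExtSummandClosed {X : T | IsCompactObject X} := by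
  refine ⟨?_, ?_, ?_, ?_⟩
  · intro X Y e hX; exact isCompact_of_iso e hX
  · exact isCompact_zero
  · intro Tr hTr h1 h3; exact isCompact_ext Tr hTr h1 h3
  · intro X Y r s hrs hX; exact isCompact_retract r s hrs hX

lemma isExtSummandClosed_inter {Q₁ Q₂ : Set T} (h₁ : IsExtSummandClosed Q₁)
    (h₂ : IsExtSummandClosed Q₂) : IsExtSummandClosed (Q₁ ∩ Q₂) := by
  refine ⟨?_, ⟨h₁.2.1, h₂.2.1⟩, ?_, ?_⟩
  · intro X Y e hX; exact ⟨h₁.1 X Y e hX.1, h₂.1 X Y e hX.2⟩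
  · intro Tr hTr ha hb
    exact ⟨h₁.2.2.1 Tr hTr ha.1 hb.1, h₂.2.2.1 Tr hTr ha.2 hb.2⟩
  · intro X Y r s hrs hX
    exact ⟨h₁.2.2.2 X Y r s hrs hX.1, h₂.2.2.2 X Y r s hrs hX.2⟩

lemma genSet_hom_vanish {W : T} {P₁ P₂ : Set ℤ}
    (hv : ∀ a ∈ P₁, ∀ b ∈ P₂, ∀ f : W⟦a⟧ ⟶ W⟦b⟧, f = 0) :
    ∀ X ∈ genSet W P₁, ∀ Y ∈ genSet W P₂, ∀ f : X ⟶ Y, f = 0 := by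
  have step1 : ∀ a ∈ P₁, genSet W P₂ ⊆ {Y : T | ∀ f : W⟦a⟧ ⟶ Y, f = 0} := by
    intro a ha
    refine genSet_subset_of ⟨?_, ?_, ?_, ?_⟩ ?_
    · rintro X Y e hX f
      have h0 : (f ≫ e.inv) = 0 := hX _
      calc f = (f ≫ e.inv) ≫ e.hom := by simp
        _ = 0 := by rw [h0, zero_comp]
    · intro f; exact (isZero_zero T).eq_of_tgt f 0
    · intro Tr hTr h1 h3 f
      have h5 : f ≫ Tr.mor₂ = 0 := h3 _
      obtain ⟨g, hg⟩ := Triangle.coyoneda_exact₂ _ hTr f h5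
      rw [hg, h1 g, zero_comp]
    · intro X Y r s hrs hX f
      calc f = (f ≫ s) ≫ r := by rw [Category.assoc, hrs, Category.comp_id]
        _ = 0 := by rw [hX (f ≫ s), zero_comp]
    · intro b hb f; exact hv a ha b hb f
  intro X hX Y hY
  refine genSet_subset_of (W := W) (P := P₁)
    (Q := {X : T | ∀ f : X ⟶ Y, f = 0}) ⟨?_, ?_, ?_, ?_⟩ ?_ hX
  · rintro X' X'' e hX' f
    calc f = e.inv ≫ (e.hom ≫ f) := by simp
      _ = 0 := by rw [hX' (e.hom ≫ f), comp_zero]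
  · intro f; exact (isZero_zero T).eq_of_src f 0
  · intro Tr hTr h1 h3 f
    have h5 : Tr.mor₁ ≫ f = 0 := h1 _
    obtain ⟨g, hg⟩ := Triangle.yoneda_exact₂ _ hTr f h5
    rw [hg, h3 g, comp_zero]
  · intro X' Y' r s hrs hX' f
    calc f = s ≫ (r ≫ f) := by rw [← Category.assoc, hrs, Category.id_comp]
      _ = 0 := by rw [hX' (r ≫ f), comp_zero]
  · intro a ha f
    exact step1 a ha hY f

/-- transfer : `aisleGen G₀ r ⊆ aisleGen G (c₀ + r)` when `G₀` is built from
`G`-shifts that are all `≥ c₀`. -/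
lemma aisleGen_transfer {G G₀ : T} {c₀ : ℤ} (hG₀ : G₀ ∈ genSet G {p | c₀ ≤ p}) (r : ℤ) :
    aisleGen G₀ r ⊆ aisleGen G (c₀ + r) := by
  refine aisleGen_subset_of (isCocompletePreAisle_aisleGen G (c₀ + r)) ?_
  intro m hm
  have h1 : G₀ ∈ aisleGen G c₀ := genSet_subset_aisleGen (fun p hp => hp) hG₀
  have h2 := aisleGen_shift h1 m
  exact aisleGen_anti (by omega) h2

end Mod8

/-- with `G` a classical generator of `T^c` and a t-structure in the
preferred class, the metrics `{L_i}` and `{M_i}` are equivalent and `{M_i}` is finer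
than `{N_i}`. -/
theorem statement15 (t : TStruct T)
    (H : T) (hHc : IsCompactObject H) (hHgen : IsGenerator H)
    (hvanish : ∃ n : ℤ, ∀ i : ℤ, n ≤ i → ∀ f : H ⟶ H⟦i⟧, f = 0)
    (hpref : InPreferredClass t)
    (G : T) (hGc : IsCompactObject G)
    (hGgen : {X : T | IsCompactObject X} ⊆ genSet G Set.univ) :
    (∀ i : ℕ, ∃ j : ℕ, Lmet G j ⊆ Mmet t i) ∧
    (∀ i : ℕ, ∃ j : ℕ, Mmet t j ⊆ Lmet G i) ∧
    (∀ i : ℕ, ∃ j : ℕ, Mmet t j ⊆ Nmet G i) := by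
  classical
  obtain ⟨G₀, hG₀c, hG₀gen, A₀, hA₀pos, hLft, hRgt⟩ := hpref
  obtain ⟨n₀, hn₀⟩ := hvanish
  -- G is finitely built from G₀
  have hGin : G ∈ genSet G₀ Set.univ := compact_mem_genSet_univ hG₀c hG₀gen hGc
  obtain ⟨SG, _, hSG⟩ := genSet_finite hGin
  obtain ⟨cG, dG, hcdG⟩ := finset_int_bdd SG
  have hGaisle : G ∈ aisleGen G₀ cG :=
    genSet_subset_aisleGen (fun m hm => (hcdG m hm).1) hSG
  -- G₀ is finitely built from G
  have hG₀in : G₀ ∈ genSet G Set.univ := hGgen hG₀c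
  obtain ⟨S₀, _, hS₀⟩ := genSet_finite hG₀in
  obtain ⟨c₀, d₀, hcd₀⟩ := finset_int_bdd S₀
  have hG₀gS : G₀ ∈ genSet G {p | c₀ ≤ p} :=
    genSet_mono (fun p hp => (hcd₀ p hp).1) hS₀
  -- G is finitely built from H
  have hGH : G ∈ genSet H Set.univ := compact_mem_genSet_univ hHc hHgen hGc
  obtain ⟨SH, _, hSH⟩ := genSet_finite hGH
  obtain ⟨cH, dH, hcdH⟩ := finset_int_bdd SH
  -- eventual self-vanishing of G
  set q₀ : ℤ := n₀ + dH - cH with hq₀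
  have hGq : ∀ q : ℤ, q₀ ≤ q → ∀ f : G ⟶ G⟦q⟧, f = 0 := by
    intro q hq
    have hbase : ∀ a ∈ (↑SH : Set ℤ), ∀ b ∈ ((· + q) '' ↑SH),
        ∀ f : H⟦a⟧ ⟶ H⟦b⟧, f = 0 := by
      rintro a ha b ⟨s, hs, rfl⟩ f
      have h1 : cH ≤ s := (hcdH s hs).1
      have h2 : a ≤ dH := (hcdH a ha).2
      exact shift_vanish (hn₀ (s + q - a) (by omega)) a (s + q) (by omega) f
    have hGq' : G⟦q⟧ ∈ genSet H ((· + q) '' ↑SH) := genSet_shift hSH q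
    exact fun f => genSet_hom_vanish hbase G hSH (G⟦q⟧) hGq' f
  -- common part of (2) and (3) : compacts in `t.le (-j)` are in `genSet G {m | s ≤ m}`
  have hMtoGen : ∀ (j : ℕ) (X : T), X ∈ Mmet t j →
      X ∈ genSet G {m | c₀ - A₀ + (j : ℤ) ≤ m} := by
    rintro j X ⟨hXc, hXle⟩
    have h1 : X⟦(-(j:ℤ))⟧ ∈ t.le 0 := by
      have h := (t.le_shift_iff (-(j:ℤ)) (-(j:ℤ)) X).mp hXle
      have he : -(j:ℤ) - -(j:ℤ) = 0 := by omega
      rwa [he] at h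
    have h2 : X⟦(-(j:ℤ))⟧ ∈ aisleGen G₀ (-A₀) := hRgt h1
    have h3 : (X⟦(-(j:ℤ))⟧)⟦(j:ℤ)⟧ ∈ aisleGen G₀ (-A₀ + j) := aisleGen_shift h2 j
    have e : (X⟦(-(j:ℤ))⟧)⟦(j:ℤ)⟧ ≅ X :=
      (shAdd X (-(j:ℤ)) (j:ℤ) 0 (by omega)).trans ((shiftFunctorZero T ℤ).app X)
    have h4 : X ∈ aisleGen G₀ (-A₀ + j) :=
      (isCocompletePreAisle_aisleGen G₀ (-A₀ + j)).1 _ _ e h3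
    have h5 : X ∈ aisleGen G (c₀ + (-A₀ + j)) := aisleGen_transfer hG₀gS _ h4
    have h6 := compact_aisleGen_mem_genSet hGc h5 hXc
    refine genSet_mono ?_ h6
    intro m hm
    simp only [Set.mem_setOf_eq] at hm ⊢
    omega
  refine ⟨?_, ?_, ?_⟩
  · -- (1) : L finer than M
    intro i
    refine ⟨(A₀ + i - cG).toNat, ?_⟩
    have hj : A₀ + (i:ℤ) - cG ≤ ((A₀ + i - cG).toNat : ℤ) := Int.self_le_toNat _
    intro X hX
    have hQ : X ∈ {Y : T | IsCompactObject Y} ∩ aisleGen G₀ (A₀ + i) := by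
      refine genSet_subset_of
        (isExtSummandClosed_inter isExtSummandClosed_compacts
          (isExtSummandClosed_of_preAisle (isCocompletePreAisle_aisleGen G₀ (A₀ + i)))) ?_ hX
      intro m hm
      simp only [Set.mem_setOf_eq] at hm
      refine ⟨isCompact_shift hGc m, ?_⟩
      have h1 : G⟦m⟧ ∈ aisleGen G₀ (cG + m) := aisleGen_shift hGaisle m
      exact aisleGen_anti (by omega) h1
    obtain ⟨hXc, hXa⟩ := hQ
    refine ⟨hXc, ?_⟩
    have h2 : X⟦(-(i:ℤ))⟧ ∈ aisleGen G₀ ((A₀ + i) + (-(i:ℤ))) := aisleGen_shift hXa _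
    have h3 : X⟦(-(i:ℤ))⟧ ∈ aisleGen G₀ A₀ := aisleGen_anti (by omega) h2
    have h4 : X⟦(-(i:ℤ))⟧ ∈ t.le 0 := hLft h3
    have h5 := (t.le_shift_iff (-(i:ℤ)) (-(i:ℤ)) X).mpr
    have he : -(i:ℤ) - -(i:ℤ) = 0 := by omega
    rw [he] at h5
    exact h5 h4
  · -- (2) : M finer than L
    intro i
    refine ⟨((i:ℤ) + A₀ - c₀).toNat, ?_⟩
    have hj : (i:ℤ) + A₀ - c₀ ≤ (((i:ℤ) + A₀ - c₀).toNat : ℤ) := Int.self_le_toNat _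
    intro X hX
    have h6 := hMtoGen _ X hX
    refine genSet_mono ?_ h6
    intro m hm
    simp only [Set.mem_setOf_eq] at hm ⊢
    omega
  · -- (3) : M finer than N
    intro i
    refine ⟨((i:ℤ) + q₀ + A₀ - c₀).toNat, ?_⟩
    have hj : (i:ℤ) + q₀ + A₀ - c₀ ≤ ((((i:ℤ) + q₀ + A₀ - c₀).toNat : ℤ)) := Int.self_le_toNat _
    intro X hX
    have hXgen := hMtoGen _ X hX
    refine ⟨hX.1, ?_⟩
    intro P hP f
    have hbase : ∀ a ∈ {m : ℤ | m ≤ (i:ℤ)}, ∀ b ∈ {m : ℤ | c₀ - A₀ + ((((i:ℤ) + q₀ + A₀ - c₀).toNat : ℤ)) ≤ m},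
        ∀ g : G⟦a⟧ ⟶ G⟦b⟧, g = 0 := by
      intro a ha b hb g
      simp only [Set.mem_setOf_eq] at ha hb
      exact shift_vanish (hGq (b - a) (by omega)) a b (by omega) g
    exact genSet_hom_vanish hbase P hP X hXgen f

end Stmt15
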